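/- If p is a source with 1/2 ≤ p(1) < 2/3, then 1 + lg p(1) ≤ R*_opt(p) < 2 + lg(1 − p(1)). -/

import Mathlib

/-- A source: a positive, monotonically nonincreasing probability mass function on `Fin n`. -/
def IsSource (n : ℕ) (p : Fin n → ℝ) : Prop :=
  (∀ i, 0 < p i) ∧ (∑ i, p i = 1) ∧ (∀ i j : Fin n, i ≤ j → p j ≤ p i)

/-- A codeword-length vector: positive integer lengths satisfying the Kraft inequality. -/
def IsCLV (n : ℕ) (l : Fin n → ℤ) : Prop :=
  (∀ i, 1 ≤ l i) ∧ (∑ i, (2:ℝ) ^ (-(l i)) ≤ 1)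

/-- Maximum pointwise redundancy `R*(l,p) = max_i (l(i) + lg p(i))`. -/
noncomputable def Rstar (n : ℕ) (l : Fin n → ℤ) (p : Fin n → ℝ) : ℝ :=
  ⨆ i : Fin n, ((l i : ℝ) + Real.logb 2 (p i))

/-- Minimum maximum pointwise redundancy over all codeword-length vectors. -/
noncomputable def RstarOpt (n : ℕ) (p : Fin n → ℝ) : ℝ :=
  sInf {r : ℝ | ∃ l : Fin n → ℤ, IsCLV n l ∧ Rstar n l p = r}

theorem stmt3 (n : ℕ) (hn : 2 ≤ n) (p : Fin n → ℝ) (hp : IsSource n p)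
    (h1 : 1/2 ≤ p ⟨0, by omega⟩) (h2 : p ⟨0, by omega⟩ < 2/3) :
    1 + Real.logb 2 (p ⟨0, by omega⟩) ≤ RstarOpt n p ∧
      RstarOpt n p < 2 + Real.logb 2 (1 - p ⟨0, by omega⟩) := by
  classical
  have hn0 : (0:ℕ) < n := by omega
  haveI : Nonempty (Fin n) := ⟨⟨0, hn0⟩⟩
  set z : Fin n := ⟨0, by omega⟩ with hz
  obtain ⟨hpos, hsum, hmono⟩ := hp
  have hp0 : (0:ℝ) < p z := hpos z
  have h2' : p z < 2/3 := h2
  have hq : (0:ℝ) < 1 - p z := by linarith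
  set q : ℝ := 1 - p z with hqdef
  -- every CLV has redundancy at least 1 + lg p(0)
  have key : ∀ l : Fin n → ℤ, IsCLV n l → 1 + Real.logb 2 (p z) ≤ Rstar n l p := by
    intro l hl
    have hb : BddAbove (Set.range fun i : Fin n => ((l i : ℝ) + Real.logb 2 (p i))) :=
      Set.Finite.bddAbove (Set.finite_range _)
    have hle := le_ciSup hb z
    have h1l : (1:ℝ) ≤ (l z : ℝ) := by exact_mod_cast hl.1 z
    calc 1 + Real.logb 2 (p z) ≤ (l z : ℝ) + Real.logb 2 (p z) := by linarith
      _ ≤ Rstar n l p := hle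
  -- the tail sum equals q, and p i ≤ q for i ≠ z
  have htail : ∑ j ∈ Finset.univ.erase z, p j = q := by
    have h := Finset.add_sum_erase Finset.univ p (Finset.mem_univ z)
    rw [hsum] at h
    linarith
  have hple : ∀ i : Fin n, i ≠ z → p i ≤ q := by
    intro i hi
    have : p i ≤ ∑ j ∈ Finset.univ.erase z, p j :=
      Finset.single_le_sum (fun j _ => (hpos j).le)
        (Finset.mem_erase.mpr ⟨hi, Finset.mem_univ i⟩)
    linarith
  -- the candidate code
  set l : Fin n → ℤ := fun i => if i = z then 1 else 1 + ⌈Real.logb 2 (q / p i)⌉ with hldef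
  have hxnn : ∀ i : Fin n, i ≠ z → 0 ≤ Real.logb 2 (q / p i) := by
    intro i hi
    exact Real.logb_nonneg (by norm_num) ((one_le_div (hpos i)).mpr (hple i hi))
  have hl1 : ∀ i, 1 ≤ l i := by
    intro i
    by_cases hi : i = z
    · simp [hldef, hi]
    · simp only [hldef, hi, if_false]
      have := Int.ceil_nonneg (hxnn i hi)
      omega
  -- bound on 2^(-(l i)) for i ≠ z
  have hpow : ∀ i : Fin n, i ≠ z → (2:ℝ) ^ (-(l i)) ≤ p i / (2 * q) := by
    intro i hi
    have hxi : (2:ℝ) ^ (Real.logb 2 (q / p i)) = q / p i :=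
      Real.rpow_logb (by norm_num) (by norm_num) (div_pos hq (hpos i))
    have hcl : Real.logb 2 (q / p i) ≤ (⌈Real.logb 2 (q / p i)⌉ : ℝ) := Int.le_ceil _
    have hli : l i = 1 + ⌈Real.logb 2 (q / p i)⌉ := by simp [hldef, hi]
    have h1 : (2:ℝ) ^ (-(l i)) = (2:ℝ) ^ (-((l i : ℤ) : ℝ)) := by
      rw [← Real.rpow_intCast]
      push_cast
      ring_nf
    rw [h1]
    have hq2 : (2:ℝ) ^ (-(1 + Real.logb 2 (q / p i))) = p i / (2 * q) := by
      rw [Real.rpow_neg (by norm_num), Real.rpow_add (by norm_num), hxi, Real.rpow_one]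
      field_simp
    rw [← hq2]
    apply Real.rpow_le_rpow_of_exponent_le (by norm_num)
    rw [hli]
    push_cast
    linarith
  -- Kraft inequality
  have hkraft : ∑ i, (2:ℝ) ^ (-(l i)) ≤ 1 := by
    have hsplit : (2:ℝ) ^ (-(l z)) + ∑ j ∈ Finset.univ.erase z, (2:ℝ) ^ (-(l j)) =
        ∑ i, (2:ℝ) ^ (-(l i)) :=
      Finset.add_sum_erase Finset.univ (fun i => (2:ℝ) ^ (-(l i))) (Finset.mem_univ z)
    have hz2 : (2:ℝ) ^ (-(l z)) = 1/2 := by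
      norm_num [hldef]
    have htb : ∑ j ∈ Finset.univ.erase z, (2:ℝ) ^ (-(l j)) ≤
        ∑ j ∈ Finset.univ.erase z, p j / (2 * q) := by
      apply Finset.sum_le_sum
      intro j hj
      exact hpow j (Finset.mem_erase.mp hj).1
    have hts : ∑ j ∈ Finset.univ.erase z, p j / (2 * q) = 1/2 := by
      rw [← Finset.sum_div, htail]
      field_simp
    rw [← hsplit, hz2]
    rw [hts] at htb
    linarith
  have hCLV : IsCLV n l := ⟨hl1, hkraft⟩
  -- pointwise redundancy bound
  have hred : ∀ i : Fin n, (l i : ℝ) + Real.logb 2 (p i) < 2 + Real.logb 2 q := by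
    intro i
    by_cases hi : i = z
    · have hlz : l i = 1 := by simp [hldef, hi]
      rw [hlz, hi]
      have hlt : p z < 2 * q := by
        simp only [hqdef]
        linarith
      have hlog : Real.logb 2 (p z) < Real.logb 2 (2 * q) :=
        Real.logb_lt_logb (by norm_num) hp0 hlt
      rw [Real.logb_mul (by norm_num) (ne_of_gt hq),
        Real.logb_self_eq_one (by norm_num)] at hlog
      push_cast
      linarith [hlog]
    · have hli : l i = 1 + ⌈Real.logb 2 (q / p i)⌉ := by simp [hldef, hi]
      have hcl : (⌈Real.logb 2 (q / p i)⌉ : ℝ) < Real.logb 2 (q / p i) + 1 :=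
        Int.ceil_lt_add_one _
      have hdiv : Real.logb 2 (q / p i) = Real.logb 2 q - Real.logb 2 (p i) :=
        Real.logb_div (ne_of_gt hq) (ne_of_gt (hpos i))
      rw [hli]
      push_cast
      linarith [hcl, hdiv]
  -- the sup is attained, so strict inequality survives
  have hRlt : Rstar n l p < 2 + Real.logb 2 q := by
    obtain ⟨i₀, hi₀⟩ := Finite.exists_max (fun i : Fin n => (l i : ℝ) + Real.logb 2 (p i))
    have : Rstar n l p ≤ (l i₀ : ℝ) + Real.logb 2 (p i₀) := ciSup_le hi₀
    exact lt_of_le_of_lt this (hred i₀)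
  -- conclude
  have hSne : {r : ℝ | ∃ l' : Fin n → ℤ, IsCLV n l' ∧ Rstar n l' p = r}.Nonempty :=
    ⟨Rstar n l p, l, hCLV, rfl⟩
  have hSbdd : BddBelow {r : ℝ | ∃ l' : Fin n → ℤ, IsCLV n l' ∧ Rstar n l' p = r} := by
    refine ⟨1 + Real.logb 2 (p z), ?_⟩
    rintro r ⟨l', hl', rfl⟩
    exact key l' hl'
  constructor
  · exact le_csInf hSne (by rintro r ⟨l', hl', rfl⟩; exact key l' hl')
  · have hmem : Rstar n l p ∈ {r : ℝ | ∃ l' : Fin n → ℤ, IsCLV n l' ∧ Rstar n l' p = r} :=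
      ⟨l, hCLV, rfl⟩
    exact lt_of_le_of_lt (csInf_le hSbdd hmem) hRlt
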